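/- arXiv:1302.5928 — 2 statements merged into one kernel-verified Lean document; each statement's English description precedes it below -/
import Mathlib

section
/- For every real t > 0, t/(1/4 + t²) + ∑_{n=1}^∞ t/((n + 1/2)² + t²) = (π/2)·tanh(π t). -/
open Real Complex

noncomputable def G (t : ℝ) : ℝ → ℂ := fun x => Complex.cosh (2*π*t*(x - 1/2))

theorem G_coeff (t : ℝ) (ht : 0 < t) (n : ℤ) :
    haveI : Fact ((0:ℝ) < 1) := ⟨one_pos⟩
    fourierCoeff (AddCircle.liftIco 1 0 (G t)) n
      = ((t * Real.sinh (π*t) / (π * (t^2 + (n:ℝ)^2)) : ℝ) : ℂ) := by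
  haveI : Fact ((0:ℝ) < 1) := ⟨one_pos⟩
  set a : ℝ := 2*π*t with ha
  have hA : (a:ℂ) = 2*(π:ℂ)*(t:ℂ) := by rw [ha]; push_cast; ring
  set c1 : ℂ := (a:ℂ) - 2*π*I*n with hc1
  set c2 : ℂ := -(a:ℂ) - 2*π*I*n with hc2
  have ha0 : (0:ℝ) < a := by rw [ha]; positivity
  have hc1ne : c1 ≠ 0 := by
    intro h; have := congrArg Complex.re h; simp [hc1] at this; linarith
  have hc2ne : c2 ≠ 0 := by
    intro h; have := congrArg Complex.re h; simp [hc2] at this; linarith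
  have coshdef : ∀ z : ℂ, Complex.cosh z = (Complex.exp z + Complex.exp (-z))/2 := fun z => rfl
  have key : ∀ x : ℝ, fourier (-n) (x : AddCircle ((0:ℝ)+1-0)) • G t x
      = Complex.exp (-(a:ℂ)/2)/2 * Complex.exp (c1*x) + Complex.exp ((a:ℂ)/2)/2 * Complex.exp (c2*x) := by
    intro x
    rw [smul_eq_mul, fourier_coe_apply]
    rw [show G t x = Complex.cosh ((a:ℂ)*x - (a:ℂ)/2) from by
      rw [G]; congr 1; rw [hA]; push_cast; ring]
    rw [coshdef]
    have e1 : Complex.exp (2*π*I*(-n:ℤ)*x/(((0:ℝ)+1-0:ℝ):ℂ)) * Complex.exp ((a:ℂ)*x - (a:ℂ)/2)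
        = Complex.exp (-(a:ℂ)/2) * Complex.exp (c1*x) := by
      rw [← Complex.exp_add, ← Complex.exp_add]; congr 1; rw [hc1]; push_cast; ring
    have e2 : Complex.exp (2*π*I*(-n:ℤ)*x/(((0:ℝ)+1-0:ℝ):ℂ)) * Complex.exp (-((a:ℂ)*x - (a:ℂ)/2))
        = Complex.exp ((a:ℂ)/2) * Complex.exp (c2*x) := by
      rw [← Complex.exp_add, ← Complex.exp_add]; congr 1; rw [hc2]; push_cast; ring
    linear_combination e1/2 + e2/2
  rw [fourierCoeff_liftIco_eq, fourierCoeffOn_eq_integral]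
  rw [intervalIntegral.integral_congr (fun x _ => key x)]
  have int1 : IntervalIntegrable (fun x:ℝ => Complex.exp (-(a:ℂ)/2)/2 * Complex.exp (c1*x))
      MeasureTheory.volume 0 (0+1) := (Continuous.intervalIntegrable (by fun_prop) _ _)
  have int2 : IntervalIntegrable (fun x:ℝ => Complex.exp ((a:ℂ)/2)/2 * Complex.exp (c2*x))
      MeasureTheory.volume 0 (0+1) := (Continuous.intervalIntegrable (by fun_prop) _ _)
  rw [intervalIntegral.integral_add int1 int2]
  rw [intervalIntegral.integral_const_mul, intervalIntegral.integral_const_mul]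
  rw [integral_exp_mul_complex hc1ne, integral_exp_mul_complex hc2ne]
  simp only [Complex.ofReal_add, Complex.ofReal_zero, Complex.ofReal_one, zero_add, mul_one,
    mul_zero, Complex.exp_zero, sub_zero, add_zero, inv_one, one_smul, one_div]
  have E11 : Complex.exp c1 = Complex.exp ((a:ℂ)/2) * Complex.exp ((a:ℂ)/2) := by
    rw [hc1, sub_eq_add_neg, Complex.exp_add,
      show -(2*(π:ℂ)*I*n) = ((-n:ℤ):ℂ)*(2*(π:ℝ)*I) by push_cast; ring,
      Complex.exp_int_mul_two_pi_mul_I, mul_one, ← Complex.exp_add]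
    congr 1; ring
  have E21 : Complex.exp c2 = Complex.exp (-(a:ℂ)/2) * Complex.exp (-(a:ℂ)/2) := by
    rw [hc2, sub_eq_add_neg, Complex.exp_add,
      show -(2*(π:ℂ)*I*n) = ((-n:ℤ):ℂ)*(2*(π:ℝ)*I) by push_cast; ring,
      Complex.exp_int_mul_two_pi_mul_I, mul_one, ← Complex.exp_add]
    congr 1; ring
  rw [E11, E21]
  set u := Complex.exp ((a:ℂ)/2) with hu
  set v := Complex.exp (-(a:ℂ)/2) with hv
  have huv : v * u = 1 := by
    rw [hv, hu, ← Complex.exp_add, show -(a:ℂ)/2 + (a:ℂ)/2 = 0 by ring, Complex.exp_zero]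
  have hπ : (π:ℂ) ≠ 0 := by exact_mod_cast Real.pi_ne_zero
  have hden : (t:ℂ)^2+(n:ℂ)^2 ≠ 0 := by
    have h0 : ((t^2+(n:ℝ)^2 : ℝ):ℂ) ≠ 0 := by rw [Complex.ofReal_ne_zero]; positivity
    push_cast at h0; exact h0
  have hd : (1:ℂ)/c1 - 1/c2 = (t:ℂ)/((π:ℂ)*((t:ℂ)^2+(n:ℂ)^2)) := by
    have hprod : c1*c2 = -((a:ℂ)^2 + 4*(π:ℂ)^2*(n:ℂ)^2) := by
      rw [hc1, hc2]
      linear_combination (4*(π:ℂ)^2*(n:ℂ)^2) * Complex.I_sq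
    have h4 : ((2*(π:ℂ)*(t:ℂ))^2 + 4*(π:ℂ)^2*(n:ℂ)^2) ≠ 0 := by
      have e : ((2*(π:ℂ)*(t:ℂ))^2 + 4*(π:ℂ)^2*(n:ℂ)^2) = (2*(π:ℂ))^2*((t:ℂ)^2+(n:ℂ)^2) := by
        ring
      rw [e]
      exact mul_ne_zero (pow_ne_zero 2 (by simpa using hπ)) hden
    rw [div_sub_div _ _ hc1ne hc2ne, hprod, hA]
    rw [show (1*c2 - c1*1 : ℂ) = -(2*(2*(π:ℂ)*(t:ℂ))) from by rw [hc1, hc2, hA]; ring]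
    rw [div_eq_div_iff (neg_ne_zero.mpr h4) (mul_ne_zero hπ hden)]
    ring
  have hRHS : ((t * Real.sinh (π*t) / (π * (t^2 + (n:ℝ)^2)) : ℝ) : ℂ)
      = (t:ℂ) * ((u - v)/2) / ((π:ℂ)*((t:ℂ)^2+(n:ℂ)^2)) := by
    have h1 : u = Complex.exp (((π*t:ℝ)):ℂ) := by rw [hu]; congr 1; rw [hA]; push_cast; ring
    have h2 : v = Complex.exp ((-(π*t):ℝ):ℂ) := by rw [hv]; congr 1; rw [hA]; push_cast; ring
    rw [h1, h2, Real.sinh_eq, ← Complex.ofReal_exp, ← Complex.ofReal_exp]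
    push_cast
    ring
  rw [hRHS]
  norm_num
  linear_combination ((u-v)/2) * hd + (u/2*(1/c1) + v/2*(1/c2)) * huv

theorem summable_aux (t : ℝ) (ht : 0 < t) :
    Summable (fun n : ℕ => 1 / (t^2 + (n:ℝ)^2)) := by
  have hb : Summable (fun n : ℕ => 1 / ((n:ℝ)+1)^2) := by
    have h2 := (summable_nat_add_iff (f := fun n : ℕ => 1/(n:ℝ)^2) 1).mpr
      (Real.summable_one_div_nat_pow.mpr one_lt_two)
    apply h2.congr
    intro n
    push_cast
    norm_num
  rw [← summable_nat_add_iff 1]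
  refine Summable.of_nonneg_of_le (fun n => by positivity) (fun n => ?_) hb
  apply one_div_le_one_div_of_le (by positivity)
  push_cast
  nlinarith [sq_nonneg t]

theorem coth_hasSum (t : ℝ) (ht : 0 < t) :
    HasSum (fun n : ℤ => t * Real.sinh (π*t) / (π * (t^2 + (n:ℝ)^2))) (Real.cosh (π*t)) := by
  haveI : Fact ((0:ℝ) < 1) := ⟨one_pos⟩
  have hG01 : G t 0 = G t (0 + 1) := by
    rw [G, G]
    rw [show (2*(π:ℂ)*t*(((0:ℝ):ℂ) - 1/2)) = -(2*(π:ℂ)*t*((((0:ℝ)+1:ℝ):ℂ) - 1/2)) by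
      push_cast; ring]
    exact Complex.cosh_neg _
  have hGcont : ContinuousOn (G t) (Set.Icc 0 (0+1)) := by
    apply Continuous.continuousOn
    unfold G
    fun_prop
  have hFc : Continuous (AddCircle.liftIco 1 0 (G t)) :=
    AddCircle.liftIco_continuous hG01 hGcont
  set F : C(AddCircle (1:ℝ), ℂ) := ⟨AddCircle.liftIco 1 0 (G t), hFc⟩ with hF
  have hcoeff : ∀ n : ℤ, fourierCoeff (F : AddCircle (1:ℝ) → ℂ) n
      = ((t * Real.sinh (π*t) / (π * (t^2 + (n:ℝ)^2)) : ℝ) : ℂ) := fun n => G_coeff t ht n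
  have hsumm : Summable (fourierCoeff (F : AddCircle (1:ℝ) → ℂ)) := by
    rw [summable_congr hcoeff]
    rw [Complex.summable_ofReal]
    apply Summable.of_nat_of_neg
    · apply ((summable_aux t ht).mul_left (t * Real.sinh (π*t) / π)).congr
      intro n; rw [div_mul_div_comm, mul_one]
      norm_num
    · apply ((summable_aux t ht).mul_left (t * Real.sinh (π*t) / π)).congr
      intro n; rw [div_mul_div_comm, mul_one]
      push_cast; norm_num
  have hpt := has_pointwise_sum_fourier_series_of_summable hsumm (0 : AddCircle (1:ℝ))
  have hF0 : F (0 : AddCircle (1:ℝ)) = ((Real.cosh (π*t) : ℝ) : ℂ) := by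
    show AddCircle.liftIco 1 0 (G t) ((0:ℝ) : AddCircle (1:ℝ)) = _
    rw [AddCircle.liftIco_coe_apply (by simp : (0:ℝ) ∈ Set.Ico 0 (0+1))]
    rw [G]
    rw [show (2*(π:ℂ)*t*(((0:ℝ):ℂ) - 1/2)) = ((-(π*t) : ℝ) : ℂ) by push_cast; ring]
    rw [← Complex.ofReal_cosh, Real.cosh_neg]
  rw [hF0] at hpt
  rw [← Complex.hasSum_ofReal]
  apply hpt.congr_fun
  intro n
  rw [hcoeff n, fourier_eval_zero, smul_eq_mul, mul_one]

theorem myHasSum_congr {ι : Type*} {f g : ι → ℝ} {a : ℝ} (h : HasSum f a)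
    (he : ∀ n, f n = g n) : HasSum g a := (funext he : f = g) ▸ h

theorem myHasSum_shift {f : ℕ → ℝ} {a : ℝ} (h : HasSum (fun n => f (n+1)) a) :
    HasSum f (a + f 0) := by
  have h2 := (hasSum_nat_add_iff (f := f) 1).mp h
  simpa [Finset.sum_range_one] using h2

theorem myHasSum_unshift {f : ℕ → ℝ} {a : ℝ} (h : HasSum f a) :
    HasSum (fun n => f (n+1)) (a - f 0) := by
  apply (hasSum_nat_add_iff (f := f) 1).mpr
  rw [Finset.sum_range_one]
  convert h using 1
  · rfl
  ring

theorem hS (t : ℝ) (ht : 0 < t) :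
    HasSum (fun n : ℕ => 1 / (t^2 + ((n:ℝ)+1)^2))
      (π * Real.cosh (π*t) / (2*t*Real.sinh (π*t)) - 1/(2*t^2)) := by
  have hs : 0 < Real.sinh (π*t) := Real.sinh_pos_iff.mpr (by positivity)
  have hπ : (π:ℝ) ≠ 0 := Real.pi_ne_zero
  have h1 := (coth_hasSum t ht).nat_add_neg
  have h1' : HasSum (fun n : ℕ => t*Real.sinh (π*t)/(π*(t^2+(n:ℝ)^2))
        + t*Real.sinh (π*t)/(π*(t^2+((-(n:ℤ)):ℝ)^2)))
      (Real.cosh (π*t) + t*Real.sinh (π*t)/(π*t^2)) := by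
    convert h1 using 2 <;> norm_num
  have h2 : HasSum (fun n : ℕ => 2*(t*Real.sinh (π*t)/(π*(t^2+(n:ℝ)^2))))
      (Real.cosh (π*t) + t*Real.sinh (π*t)/(π*t^2)) :=
    myHasSum_congr h1' (fun n => by push_cast; ring)
  have h3 := myHasSum_unshift h2
  have h4 := h3.mul_left (π/(2*t*Real.sinh (π*t)))
  have h4' : HasSum
      (fun n : ℕ => π/(2*t*Real.sinh (π*t)) * (2*(t*Real.sinh (π*t)/(π*(t^2+((n:ℝ)+1)^2)))))
      (π * Real.cosh (π*t) / (2*t*Real.sinh (π*t)) - 1/(2*t^2)) := by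
    have h4'' : HasSum
        (fun n : ℕ => π/(2*t*Real.sinh (π*t)) * (2*(t*Real.sinh (π*t)/(π*(t^2+(↑(n+1):ℝ)^2)))))
        (π * Real.cosh (π*t) / (2*t*Real.sinh (π*t)) - 1/(2*t^2)) := by
      convert h4 using 1
      · rfl
      field_simp
      ring
    exact myHasSum_congr h4'' (fun n => by push_cast; ring_nf)
  refine myHasSum_congr h4' (fun n => ?_)
  have hden : t^2 + ((n:ℝ)+1)^2 ≠ 0 := by positivity
  field_simp

theorem half_hasSum (t : ℝ) (ht : 0 < t) :
    HasSum (fun n : ℕ => t / (((n:ℝ) + 1/2)^2 + t^2)) ((π/2) * Real.tanh (π*t)) := by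
  have hu : 0 < 2*t := by linarith
  set f : ℕ → ℝ := fun m => 1 / ((2*t)^2 + (m:ℝ)^2) with hf
  set A : ℝ := π * Real.cosh (π*(2*t)) / (2*(2*t)*Real.sinh (π*(2*t))) - 1/(2*(2*t)^2) with hA
  set B : ℝ := π * Real.cosh (π*t) / (2*t*Real.sinh (π*t)) - 1/(2*t^2) with hB
  have hfull : HasSum f (A + 1/(2*t)^2) := by
    have hshift : HasSum (fun n => f (n+1)) A :=
      myHasSum_congr (hS (2*t) hu) (fun n => by rw [hf]; push_cast; ring_nf)
    have := myHasSum_shift hshift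
    convert this using 2
    rw [hf]
    norm_num
  have heven : HasSum (fun k : ℕ => f (2*k)) ((1/4) * (B + 1/t^2)) := by
    have hfullt : HasSum (fun m : ℕ => 1/(t^2 + (m:ℝ)^2)) (B + 1/t^2) := by
      have hshift : HasSum (fun n : ℕ => 1/(t^2 + ((n:ℝ)+1)^2)) B := hS t ht
      have := myHasSum_shift (f := fun m : ℕ => 1/(t^2 + (m:ℝ)^2))
        (myHasSum_congr hshift (fun n => by push_cast; ring_nf))
      convert this using 2
      norm_num
    refine myHasSum_congr (hfullt.mul_left (1/4)) (fun k => ?_)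
    rw [hf]
    have hd1 : t^2 + (k:ℝ)^2 ≠ 0 := by positivity
    have hd2 : (2*t)^2 + ((2*k:ℕ):ℝ)^2 ≠ 0 := by positivity
    field_simp
    push_cast
    ring
  have hoddsummable : Summable (fun k : ℕ => f (2*k+1)) :=
    hfull.summable.comp_injective (fun a b hab => by omega)
  have hodd := hoddsummable.hasSum
  have hsplit := heven.even_add_odd hodd
  have hoddval : ∑' k, f (2*k+1) = (A + 1/(2*t)^2) - (1/4) * (B + 1/t^2) := by
    have := hfull.unique hsplit
    linarith
  rw [hoddval] at hodd
  have hmul := hodd.mul_left (4*t)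
  have hmul' : HasSum (fun n : ℕ => (4*t) * f (2*n+1)) ((π/2) * Real.tanh (π*t)) := by
    convert hmul using 1
    · rfl
    rw [hA, hB]
    have hc : 0 < Real.cosh (π*t) := Real.cosh_pos _
    have hs : 0 < Real.sinh (π*t) := Real.sinh_pos_iff.mpr (by positivity)
    have h2m : π*(2*t) = 2*(π*t) := by ring
    rw [h2m, Real.sinh_two_mul, Real.cosh_two_mul, Real.tanh_eq_sinh_div_cosh]
    have hsq := Real.cosh_sq_sub_sinh_sq (π*t)
    field_simp
    nlinarith [hsq, hs, hc, ht]
  refine myHasSum_congr hmul' (fun n => ?_)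
  rw [hf]
  have hd1 : (2*t)^2 + ((2*n+1:ℕ):ℝ)^2 ≠ 0 := by positivity
  have hd2 : ((n:ℝ) + 1/2)^2 + t^2 ≠ 0 := by positivity
  field_simp
  push_cast
  ring

theorem tanh_partial_fraction (t : ℝ) (ht : 0 < t) :
    t / (1 / 4 + t ^ 2) + ∑' n : ℕ, t / (((n : ℝ) + 1 + 1 / 2) ^ 2 + t ^ 2)
      = (π / 2) * Real.tanh (π * t) := by
  have h := half_hasSum t ht
  have h1 : HasSum (fun n : ℕ => t / (((n:ℝ) + 1 + 1/2)^2 + t^2))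
      ((π/2) * Real.tanh (π*t) - t / (1/4 + t^2)) := by
    have h2 := myHasSum_unshift h
    have h2' : HasSum (fun n : ℕ => t / ((↑(n+1:ℕ) + 1/2)^2 + t^2))
        ((π/2) * Real.tanh (π*t) - t / (1/4 + t^2)) := by
      convert h2 using 2
      norm_num
    exact myHasSum_congr h2' (fun n => by push_cast; ring_nf)
  rw [h1.tsum_eq]
  ring
end

section
/- For all σ' > 1/2 and T > 0, ∑_{k=0}^∞ |log(1 − iT/((k+σ')(k+σ'−1/2) + T² + iT/2))| ≤ C·T·∫_0^∞ dx/(x² + T²) = C·π/2 for some absolute constant C; in particular the sum is O(1) uniformly in T. -/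
open Complex Real

lemma integral_val {T : ℝ} (hT : 0 < T) :
    (∫ x in Set.Ioi (0 : ℝ), 1 / (x ^ 2 + T ^ 2)) = π / (2 * T) := by
  have hT0 : T ≠ 0 := hT.ne'
  have h1 : ∀ x : ℝ, 1 / (x ^ 2 + T ^ 2) = T⁻¹ * T⁻¹ * (1 + (T⁻¹ * x) ^ 2)⁻¹ := by
    intro x
    rw [eq_comm, mul_inv_eq_iff_eq_mul₀ (by positivity)]
    field_simp
    ring
  simp_rw [h1]
  rw [MeasureTheory.integral_const_mul,
    MeasureTheory.integral_comp_mul_left_Ioi (fun y => (1 + y ^ 2)⁻¹) 0 (inv_pos.mpr hT)]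
  simp only [mul_zero, integral_Ioi_inv_one_add_sq, arctan_zero, sub_zero, smul_eq_mul,
    inv_inv]
  field_simp

lemma integrable_aux {T : ℝ} (hT : 0 < T) :
    MeasureTheory.Integrable (fun x : ℝ => T / (x ^ 2 + T ^ 2)) := by
  have h1 : ∀ x : ℝ, T / (x ^ 2 + T ^ 2) = T * T⁻¹ * T⁻¹ * (1 + (T⁻¹ * x) ^ 2)⁻¹ := by
    intro x
    rw [div_eq_iff (by positivity)]
    field_simp
    ring
  simp_rw [h1]
  exact ((integrable_inv_one_add_sq.comp_mul_left' (R := T⁻¹)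
    (inv_ne_zero hT.ne')).const_mul _)

lemma sum_bound {T : ℝ} (hT : 0 < T) (n : ℕ) :
    ∑ i ∈ Finset.range n, T / (((i : ℝ) + 1) ^ 2 + T ^ 2) ≤ π / 2 := by
  have hanti : AntitoneOn (fun x : ℝ => T / (x ^ 2 + T ^ 2))
      (Set.Icc (0 : ℝ) (0 + (n : ℝ))) := by
    intro x hx y hy hxy
    have hx0 : 0 ≤ x := hx.1
    exact div_le_div_of_nonneg_left hT.le (by positivity) (by nlinarith)
  have h := hanti.sum_le_integral
  have hL : ∀ i : ℕ, (fun x : ℝ => T / (x ^ 2 + T ^ 2)) ((0 : ℝ) + ((i + 1 : ℕ) : ℝ))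
      = T / (((i : ℝ) + 1) ^ 2 + T ^ 2) := by
    intro i; push_cast; ring_nf
  rw [Finset.sum_congr rfl (fun i _ => hL i)] at h
  refine h.trans ?_
  rw [zero_add, intervalIntegral.integral_of_le (by positivity)]
  have hmono : (∫ x in Set.Ioc (0 : ℝ) (n : ℝ), T / (x ^ 2 + T ^ 2))
      ≤ ∫ x in Set.Ioi (0 : ℝ), T / (x ^ 2 + T ^ 2) := by
    apply MeasureTheory.setIntegral_mono_set (integrable_aux hT).integrableOn
    · filter_upwards with x using by positivity
    · filter_upwards with x hx using hx.1
  refine hmono.trans ?_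
  have heq : (∫ x in Set.Ioi (0 : ℝ), T / (x ^ 2 + T ^ 2))
      = T * ∫ x in Set.Ioi (0 : ℝ), 1 / (x ^ 2 + T ^ 2) := by
    rw [← MeasureTheory.integral_const_mul]
    congr 1 with x
    ring
  rw [heq, integral_val hT]
  have : T * (π / (2 * T)) = π / 2 := by
    field_simp
  exact this.le

theorem log_sum_bound :
    ∃ C : ℝ, 0 < C ∧ ∀ σ' : ℝ, 1 / 2 < σ' → ∀ T : ℝ, 0 < T →
      (∑' k : ℕ, ‖Complex.log (1 - Complex.I * (T : ℂ) /
          (((k : ℂ) + (σ' : ℂ)) * ((k : ℂ) + (σ' : ℂ) - 1 / 2)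
            + (T : ℂ) ^ 2 + Complex.I * (T : ℂ) / 2))‖)
        ≤ C * T * ∫ x in Set.Ioi (0 : ℝ), 1 / (x ^ 2 + T ^ 2) ∧
      C * T * (∫ x in Set.Ioi (0 : ℝ), 1 / (x ^ 2 + T ^ 2)) = C * (π / 2) := by
  refine ⟨4, by norm_num, fun σ' hσ T hT => ?_⟩
  have hval : (∫ x in Set.Ioi (0 : ℝ), 1 / (x ^ 2 + T ^ 2)) = π / (2 * T) :=
    integral_val hT
  have hval4 : (4 : ℝ) * T * (π / (2 * T)) = 4 * (π / 2) := by
    field_simp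
  refine ⟨?_, by rw [hval, hval4]⟩
  -- abbreviations
  set a : ℕ → ℝ := fun k => ((k : ℝ) + σ') * ((k : ℝ) + σ' - 1 / 2) with ha_def
  have hak : ∀ k : ℕ, 0 < a k := by
    intro k
    have h1 : (0 : ℝ) < (k : ℝ) + σ' := by positivity
    have h2 : (0 : ℝ) < (k : ℝ) + σ' - 1 / 2 := by
      have : (0 : ℝ) ≤ (k : ℝ) := Nat.cast_nonneg k
      linarith
    exact mul_pos h1 h2
  have hD : ∀ k : ℕ, ((k : ℂ) + (σ' : ℂ)) * ((k : ℂ) + (σ' : ℂ) - 1 / 2)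
      + (T : ℂ) ^ 2 + Complex.I * (T : ℂ) / 2
      = ((a k + T ^ 2 : ℝ) : ℂ) + ((T / 2 : ℝ) : ℂ) * Complex.I := by
    intro k
    simp only [ha_def]
    push_cast
    ring
  set D : ℕ → ℂ := fun k => ((a k + T ^ 2 : ℝ) : ℂ) + ((T / 2 : ℝ) : ℂ) * Complex.I
    with hD_def
  have hDre : ∀ k, (D k).re = a k + T ^ 2 := by intro k; simp [hD_def, ← Complex.ofReal_pow]
  have hDnorm : ∀ k, a k + T ^ 2 ≤ ‖D k‖ := by
    intro k
    calc a k + T ^ 2 = (D k).re := (hDre k).symm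
      _ ≤ ‖D k‖ := Complex.re_le_norm _
      _ = ‖D k‖ := rfl
  have hDpos : ∀ k, (0 : ℝ) < a k + T ^ 2 := fun k => by
    have := hak k; positivity
  have hD0 : ∀ k, D k ≠ 0 := by
    intro k h
    have := hDre k
    rw [h] at this
    simp at this
    nlinarith [hak k, sq_nonneg T]
  have hznorm : ∀ k, ‖Complex.I * (T : ℂ) / D k‖ = T / ‖D k‖ := by
    intro k
    rw [norm_div, norm_mul, Complex.norm_I, Complex.norm_real, one_mul,
      Real.norm_of_nonneg hT.le]
  have hzle : ∀ k, ‖Complex.I * (T : ℂ) / D k‖ ≤ T / (a k + T ^ 2) := by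
    intro k
    rw [hznorm k]
    exact div_le_div_of_nonneg_left hT.le (hDpos k) (hDnorm k)
  -- the bounding sequence
  set f : ℕ → ℝ := fun k => if k = 0 then π else 3 / 2 * (T / ((k : ℝ) ^ 2 + T ^ 2))
    with hf_def
  -- termwise bound
  have hterm : ∀ k : ℕ,
      ‖Complex.log (1 - Complex.I * (T : ℂ) / (((k : ℂ) + (σ' : ℂ)) *
        ((k : ℂ) + (σ' : ℂ) - 1 / 2) + (T : ℂ) ^ 2 + Complex.I * (T : ℂ) / 2))‖ ≤ f k := by
    intro k
    rw [hD k]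
    match k with
    | 0 =>
      -- the term is i·arg of a unimodular number
      have hconj : (1 : ℂ) - Complex.I * (T : ℂ) / D 0
          = (starRingEnd ℂ) (D 0) / D 0 := by
        rw [eq_div_iff (hD0 0), sub_mul, one_mul, div_mul_cancel₀ _ (hD0 0)]
        simp only [hD_def, map_add, map_mul, Complex.conj_ofReal, Complex.conj_I]
        push_cast
        ring
      rw [hconj]
      have habs : ‖(starRingEnd ℂ) (D 0) / D 0‖ = 1 := by
        rw [norm_div, Complex.norm_conj, div_self (by
          simpa using hD0 0)]
      rw [Complex.log, habs, Real.log_one, Complex.ofReal_zero, zero_add,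
        norm_mul, Complex.norm_I, mul_one, Complex.norm_real, Real.norm_eq_abs]
      simpa [hf_def] using Complex.abs_arg_le_pi _
    | (n + 1) =>
      have hk1 : (1 : ℝ) ≤ ((n + 1 : ℕ) : ℝ) := by exact_mod_cast Nat.one_le_iff_ne_zero.mpr (Nat.succ_ne_zero n)
      have hksq : ((n + 1 : ℕ) : ℝ) ^ 2 ≤ a (n + 1) := by
        have h1 : ((n + 1 : ℕ) : ℝ) ≤ ((n + 1 : ℕ) : ℝ) + σ' - 1 / 2 := by linarith
        have h2 : ((n + 1 : ℕ) : ℝ) ≤ ((n + 1 : ℕ) : ℝ) + σ' := by linarith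
        have h0 : (0 : ℝ) ≤ ((n + 1 : ℕ) : ℝ) := by positivity
        simp only [ha_def]
        nlinarith
      have hz2 : ‖Complex.I * (T : ℂ) / D (n + 1)‖ ≤ T / (((n + 1 : ℕ) : ℝ) ^ 2 + T ^ 2) := by
        refine (hzle (n + 1)).trans ?_
        exact div_le_div_of_nonneg_left hT.le (by positivity) (by linarith [hksq])
      have hhalf : T / (((n + 1 : ℕ) : ℝ) ^ 2 + T ^ 2) ≤ 1 / 2 := by
        rw [div_le_div_iff₀ (by positivity) (by norm_num)]
        nlinarith [sq_nonneg (T - 1), hk1]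
      have hzhalf : ‖-(Complex.I * (T : ℂ) / D (n + 1))‖ ≤ 1 / 2 := by
        rw [norm_neg]
        exact hz2.trans hhalf
      have hlog : ‖Complex.log (1 - Complex.I * (T : ℂ) / D (n + 1))‖
          ≤ 3 / 2 * ‖Complex.I * (T : ℂ) / D (n + 1)‖ := by
        rw [sub_eq_add_neg]
        have h := Complex.norm_log_one_add_half_le_self hzhalf
        rwa [norm_neg] at h
      refine hlog.trans ?_
      have : (3 : ℝ) / 2 * ‖Complex.I * (T : ℂ) / D (n + 1)‖
          ≤ 3 / 2 * (T / (((n + 1 : ℕ) : ℝ) ^ 2 + T ^ 2)) := by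
        gcongr
      refine this.trans ?_
      simp [hf_def]
  -- summability of f
  have hf1 : ∀ k : ℕ, f (k + 1) = 3 / 2 * (T / (((k : ℝ) + 1) ^ 2 + T ^ 2)) := by
    intro k
    simp only [hf_def, Nat.succ_ne_zero, if_false]
    push_cast
    ring_nf
  have hsum_shift : Summable (fun k : ℕ => 3 / 2 * (T / (((k : ℝ) + 1) ^ 2 + T ^ 2))) := by
    refine Summable.of_nonneg_of_le (f := fun k : ℕ => 3 / 2 * T * (1 / ((k : ℝ) + 1) ^ 2))
      (fun k => by positivity) ?_ ?_
    · intro k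
      have h : T / (((k : ℝ) + 1) ^ 2 + T ^ 2) ≤ T / ((k : ℝ) + 1) ^ 2 :=
        div_le_div_of_nonneg_left hT.le (by positivity) (by nlinarith [sq_nonneg T])
      calc 3 / 2 * (T / (((k : ℝ) + 1) ^ 2 + T ^ 2))
          ≤ 3 / 2 * (T / ((k : ℝ) + 1) ^ 2) := by linarith
        _ = 3 / 2 * T * (1 / ((k : ℝ) + 1) ^ 2) := by ring
    · apply Summable.mul_left
      have : Summable (fun n : ℕ => 1 / (n : ℝ) ^ 2) :=
        Real.summable_one_div_nat_pow.mpr one_lt_two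
      have h2 := (summable_nat_add_iff 1).mpr this
      simpa using h2
  have hf_sum : Summable f := by
    rw [← summable_nat_add_iff 1]
    simpa [hf1] using hsum_shift
  have hF_sum : Summable (fun k : ℕ =>
      ‖Complex.log (1 - Complex.I * (T : ℂ) / (((k : ℂ) + (σ' : ℂ)) *
        ((k : ℂ) + (σ' : ℂ) - 1 / 2) + (T : ℂ) ^ 2 + Complex.I * (T : ℂ) / 2))‖) :=
    Summable.of_nonneg_of_le (fun k => norm_nonneg _) hterm hf_sum
  -- bound the tail sum
  have htail : (∑' k : ℕ, T / (((k : ℝ) + 1) ^ 2 + T ^ 2)) ≤ π / 2 := by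
    apply Summable.tsum_le_of_sum_le
    · have := hsum_shift.mul_left (2 / 3)
      have h32 : (2 : ℝ) / 3 * (3 / 2) = 1 := by norm_num
      simpa [← mul_assoc, h32] using this
    · intro s
      obtain ⟨n, hn⟩ := s.exists_nat_subset_range
      calc ∑ i ∈ s, T / (((i : ℝ) + 1) ^ 2 + T ^ 2)
          ≤ ∑ i ∈ Finset.range n, T / (((i : ℝ) + 1) ^ 2 + T ^ 2) :=
            Finset.sum_le_sum_of_subset_of_nonneg hn (fun i _ _ => by positivity)
        _ ≤ π / 2 := sum_bound hT n
  have hfsum_val : (∑' k : ℕ, f k) ≤ π + 3 / 2 * (π / 2) := by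
    rw [Summable.tsum_eq_zero_add hf_sum]
    have h0 : f 0 = π := by simp [hf_def]
    rw [h0]
    gcongr
    calc (∑' k : ℕ, f (k + 1)) = ∑' k : ℕ, 3 / 2 * (T / (((k : ℝ) + 1) ^ 2 + T ^ 2)) := by
          simp_rw [hf1]
      _ = 3 / 2 * ∑' k : ℕ, T / (((k : ℝ) + 1) ^ 2 + T ^ 2) := tsum_mul_left
      _ ≤ 3 / 2 * (π / 2) := mul_le_mul_of_nonneg_left htail (by norm_num)
  calc (∑' k : ℕ, ‖Complex.log (1 - Complex.I * (T : ℂ) /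
          (((k : ℂ) + (σ' : ℂ)) * ((k : ℂ) + (σ' : ℂ) - 1 / 2)
            + (T : ℂ) ^ 2 + Complex.I * (T : ℂ) / 2))‖)
      ≤ ∑' k : ℕ, f k := Summable.tsum_le_tsum hterm hF_sum hf_sum
    _ ≤ π + 3 / 2 * (π / 2) := hfsum_val
    _ ≤ 4 * T * ∫ x in Set.Ioi (0 : ℝ), 1 / (x ^ 2 + T ^ 2) := by
        rw [hval, hval4]
        nlinarith [Real.pi_pos]
end
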